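/- In the group U = ²G₂^syl(q), the conjugate of Y(t₁,t₃,t₄) by Y(s₁,s₃,s₄) (i.e. Y(s₁,s₃,s₄)·Y(t₁,t₃,t₄)·Y(s₁,s₃,s₄)⁻¹) equals Y(t₁, t₃ + t₁s₁^(3θ) − t₁^(3θ)s₁, t₄ + t₁²s₁^(3θ) + t₁^(3θ)s₁² + t₁^(3θ+1)s₁ + t₃s₁ − t₁s₃). -/
import Mathlib


/-- The finite field with `3^(2m+1)` elements. -/
abbrev K (m : ℕ) := GaloisField 3 (2 * m + 1)

/-- Multiplication of `²G₂^syl(q)` in the coordinates `Y(t₁,t₃,t₄) ∈ F_q³`. -/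
noncomputable def Ymul (m : ℕ) (x y : K m × K m × K m) : K m × K m × K m :=
  (x.1 + y.1,
   x.2.1 + y.2.1 - x.1 * y.1 ^ (3 ^ (m + 1)),
   x.2.2 + y.2.2 + x.1 * y.1 ^ (3 ^ (m + 1) + 1) - x.1 ^ 2 * y.1 ^ (3 ^ (m + 1)) -
     x.2.1 * y.1)

/-- Inversion of `²G₂^syl(q)`. -/
noncomputable def Yinv (m : ℕ) (x : K m × K m × K m) : K m × K m × K m :=
  (-x.1, -x.2.1 - x.1 ^ (3 ^ (m + 1) + 1), -x.2.2 + x.1 ^ (3 ^ (m + 1) + 2) - x.1 * x.2.1)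


/-- Conjugation `Y(s₁,s₃,s₄)·Y(t₁,t₃,t₄)·Y(s₁,s₃,s₄)⁻¹` in `²G₂^syl(q)`. -/
theorem stmt_8 (m : ℕ) (t₁ t₃ t₄ s₁ s₃ s₄ : K m) :
    Ymul m (Ymul m (s₁, s₃, s₄) (t₁, t₃, t₄)) (Yinv m (s₁, s₃, s₄)) =
      (t₁, t₃ + t₁ * s₁ ^ (3 ^ (m + 1)) - t₁ ^ (3 ^ (m + 1)) * s₁,
        t₄ + (t₁ ^ 2 * s₁ ^ (3 ^ (m + 1)) + t₁ ^ (3 ^ (m + 1)) * s₁ ^ 2) +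
          t₁ ^ (3 ^ (m + 1) + 1) * s₁ + (t₃ * s₁ - t₁ * s₃)) := by
  have h3 : (3 : K m) = 0 := by
    exact_mod_cast CharP.cast_eq_zero (K m) 3
  have hodd : Odd (3 ^ (m + 1)) := Odd.pow (by decide)
  have eA : (-s₁) ^ 3 ^ (m + 1) = -s₁ ^ 3 ^ (m + 1) := hodd.neg_pow s₁
  have eB : (-s₁) ^ (3 ^ (m + 1) + 1) = s₁ ^ 3 ^ (m + 1) * s₁ := by
    rw [pow_succ, eA]; ring
  have eC : s₁ ^ (3 ^ (m + 1) + 1) = s₁ ^ 3 ^ (m + 1) * s₁ := pow_succ s₁ _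
  have eD : s₁ ^ (3 ^ (m + 1) + 2) = s₁ ^ 3 ^ (m + 1) * s₁ ^ 2 := pow_add s₁ _ 2
  have eE : t₁ ^ (3 ^ (m + 1) + 1) = t₁ ^ 3 ^ (m + 1) * t₁ := pow_succ t₁ _
  simp only [Ymul, Yinv, Prod.mk.injEq, eA, eB, eC, eD, eE]
  generalize s₁ ^ 3 ^ (m + 1) = S
  generalize t₁ ^ 3 ^ (m + 1) = T
  refine ⟨by ring, by ring, ?_⟩
  linear_combination (s₁ ^ 2 * S - s₁ ^ 2 * T + s₁ * t₁ * S) * h3
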